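/- Let E be a nonempty finite set and T > 0. Let g : E × (E → ℝ) → ℝ, H : E × (E → ℝ) × (E → ℝ) → ℝ and q* : E × E × (E → ℝ) × (E → ℝ) → ℝ be given, and define h*(m, u) : E → ℝ by h*(m, u)(x') = ∑_{x ∈ E} q*(x, x', m, u)·m(x). Suppose (u, m) with u, m : [0,T] → (E → ℝ) is a continuously differentiable solution of the forward-backward system: ∂_t u(t, x) = H(x, m(t, ·), u(t, ·)) for all (t,x) ∈ [0,T] × E, ∂_t m(t, x') = ∑_{x ∈ E} m(t, x)·q*(x, x', m(t, ·), u(t, ·)) for all (t,x') ∈ [0,T] × E, with u(T, x) = g(x, m(T, ·)). Suppose 𝒰 : [0,T] × E × (E → ℝ) → ℝ is, for each x, continuously differentiable in (t, m̃) ∈ [0,T] × ℝ^E and solves the master equation: −∂_t 𝒰(t, x, m̃) + H(x, m̃, 𝒰(t, ·, m̃)) − ∑_{x' ∈ E} h*(m̃, 𝒰(t, ·, m̃))(x')·(∂𝒰/∂m̃(x'))(t, x, m̃) = 0 for all (t, x, m̃), with terminal condition 𝒰(T, x, m̃) = g(x, m̃). Assume there is a constant L such that, for all t ∈ [0,T],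 x, x' ∈ E and all w, w' : E → ℝ: |H(x, m(t,·), w) − H(x, m(t,·), w')| ≤ L·max_{y}|w(y) − w'(y)|, |q*(x, x', m(t,·), w) − q*(x, x', m(t,·), w')| ≤ L·max_{y}|w(y) − w'(y)|, |m(t, x)| ≤ L, and |(∂𝒰/∂m̃(x'))(t, x, m(t,·))| ≤ L. Then 𝒰(t, x, m(t, ·)) = u(t, x) for all (t, x) ∈ [0,T] × E. -/

import Mathlib

open scoped BigOperators

lemma chain_aux {E : Type*} [Fintype E] [DecidableEq E]
    (F : ℝ × (E → ℝ) → ℝ) (hF : ContDiff ℝ 1 F)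
    (m : ℝ → E → ℝ) (m' : E → ℝ) (t : ℝ)
    (hm : ∀ x, HasDerivAt (fun τ => m τ x) (m' x) t) :
    HasDerivAt (fun τ => F (τ, m τ))
      (deriv (fun τ => F (τ, m t)) t
        + ∑ x' : E, m' x' * fderiv ℝ (fun μ => F (t, μ)) (m t) (Pi.single x' 1)) t := by
  have hFd : HasFDerivAt F (fderiv ℝ F (t, m t)) (t, m t) :=
    (hF.differentiable one_ne_zero (t, m t)).hasFDerivAt
  set D := fderiv ℝ F (t, m t) with hD
  have hγ : HasDerivAt (fun τ => ((τ, m τ) : ℝ × (E → ℝ))) (1, m') t :=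
    (hasDerivAt_id t).prodMk (hasDerivAt_pi.2 hm)
  have hcomp := hFd.comp_hasDerivAt t hγ
  have hpt : HasDerivAt (fun τ => F (τ, m t)) (D (1, 0)) t := by
    have hγ0 : HasDerivAt (fun τ => ((τ, m t) : ℝ × (E → ℝ))) (1, 0) t :=
      (hasDerivAt_id t).prodMk (hasDerivAt_const t _)
    exact hFd.comp_hasDerivAt t hγ0
  have hpm : HasFDerivAt (fun μ => F (t, μ))
      (D.comp (ContinuousLinearMap.inr ℝ ℝ (E → ℝ))) (m t) := by
    have : HasFDerivAt (fun μ : E → ℝ => ((t, μ) : ℝ × (E → ℝ)))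
        (ContinuousLinearMap.inr ℝ ℝ (E → ℝ)) (m t) :=
      (hasFDerivAt_const t _).prodMk (hasFDerivAt_id _)
    exact hFd.comp (m t) this
  have hsum : (m' : E → ℝ) = ∑ x' : E, m' x' • (Pi.single x' (1 : ℝ) : E → ℝ) := by
    funext y
    simp [Finset.sum_apply, Pi.single_apply]
  have key : D (1, m') = deriv (fun τ => F (τ, m t)) t
      + ∑ x' : E, m' x' * fderiv ℝ (fun μ => F (t, μ)) (m t) (Pi.single x' 1) := by
    have h1 : (1, m') = ((1 : ℝ), (0 : E → ℝ)) + ((0 : ℝ), m') := by simp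
    rw [h1, map_add, hpt.deriv, hpm.fderiv]
    congr 1
    have : D ((0 : ℝ), m') = (D.comp (ContinuousLinearMap.inr ℝ ℝ (E → ℝ))) m' := rfl
    rw [this]
    nth_rewrite 1 [hsum]
    rw [map_sum]
    simp [smul_eq_mul]
  rw [← key]
  exact hcomp

/-- Finite-state MFG: the solution of the forward-backward ODE system plays the role of
characteristics for the master equation.  If `(u, m)` solves the forward-backward system
and `𝒰` is a C¹ solution of the master equation (with the stated Lipschitz/boundedness
bounds along the flow), then `𝒰(t, x, m(t,·)) = u(t, x)` on `[0,T]`. -/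
theorem master_equation_characteristics
    {E : Type*} [Fintype E] [Nonempty E] [DecidableEq E]
    (T : ℝ) (hT : 0 < T)
    (g : E → (E → ℝ) → ℝ)
    (H : E → (E → ℝ) → (E → ℝ) → ℝ)
    (qstar : E → E → (E → ℝ) → (E → ℝ) → ℝ)
    (hstar : (E → ℝ) → (E → ℝ) → E → ℝ)
    (hhstar : ∀ (mm uu : E → ℝ) (x' : E), hstar mm uu x' = ∑ x : E, qstar x x' mm uu * mm x)
    -- the forward-backward system
    (u m : ℝ → E → ℝ)
    (hu : ∀ x : E, ∀ t ∈ Set.Icc (0 : ℝ) T,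
      HasDerivAt (fun τ => u τ x) (H x (m t) (u t)) t)
    (hm : ∀ x' : E, ∀ t ∈ Set.Icc (0 : ℝ) T,
      HasDerivAt (fun τ => m τ x') (∑ x : E, m t x * qstar x x' (m t) (u t)) t)
    (huT : ∀ x : E, u T x = g x (m T))
    -- the master equation
    (𝒰 : ℝ → E → (E → ℝ) → ℝ)
    (h𝒰smooth : ∀ x : E, ContDiff ℝ 1 (fun q : ℝ × (E → ℝ) => 𝒰 q.1 x q.2))
    (hmaster : ∀ (t : ℝ) (x : E) (mt : E → ℝ),
      -deriv (fun τ => 𝒰 τ x mt) t + H x mt (fun y => 𝒰 t y mt)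
        - ∑ x' : E, hstar mt (fun y => 𝒰 t y mt) x'
            * (fderiv ℝ (fun μ => 𝒰 t x μ) mt (Pi.single x' 1)) = 0)
    (h𝒰T : ∀ (x : E) (mt : E → ℝ), 𝒰 T x mt = g x mt)
    -- Lipschitz and boundedness assumptions along the flow
    (L : ℝ)
    (hHlip : ∀ t ∈ Set.Icc (0 : ℝ) T, ∀ (x : E) (w w' : E → ℝ),
      |H x (m t) w - H x (m t) w'| ≤ L * ‖w - w'‖)
    (hqlip : ∀ t ∈ Set.Icc (0 : ℝ) T, ∀ (x x' : E) (w w' : E → ℝ),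
      |qstar x x' (m t) w - qstar x x' (m t) w'| ≤ L * ‖w - w'‖)
    (hmbd : ∀ t ∈ Set.Icc (0 : ℝ) T, ∀ x : E, |m t x| ≤ L)
    (h𝒰mbd : ∀ t ∈ Set.Icc (0 : ℝ) T, ∀ x x' : E,
      |fderiv ℝ (fun μ => 𝒰 t x μ) (m t) (Pi.single x' 1)| ≤ L) :
    ∀ t ∈ Set.Icc (0 : ℝ) T, ∀ x : E, 𝒰 t x (m t) = u t x := by
  classical
  set N : ℝ := (Fintype.card E : ℝ) with hN
  have hN0 : 0 ≤ N := Nat.cast_nonneg _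
  have hL0 : 0 ≤ L :=
    le_trans (abs_nonneg _) (hmbd 0 ⟨le_rfl, hT.le⟩ (Classical.arbitrary E))
  set C : ℝ := L + N ^ 2 * L ^ 3 with hC
  have hC0 : 0 ≤ C := by positivity
  -- the defect function
  set φ : ℝ → E → ℝ := fun t x => 𝒰 t x (m t) - u t x with hφ
  set φ' : ℝ → E → ℝ := fun t x =>
    (H x (m t) (fun y => 𝒰 t y (m t)) - H x (m t) (u t))
      + ∑ x' : E, ((∑ y : E, m t y * qstar y x' (m t) (u t))
          - hstar (m t) (fun y => 𝒰 t y (m t)) x')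
        * fderiv ℝ (fun μ => 𝒰 t x μ) (m t) (Pi.single x' 1) with hφ'
  -- key fact: the function difference equals φ t
  have hdiff : ∀ t : ℝ, (fun y => 𝒰 t y (m t)) - u t = φ t := by
    intro t; funext y; simp [hφ]
  -- derivative of φ
  have hderiv : ∀ t ∈ Set.Icc (0 : ℝ) T, HasDerivAt φ (φ' t) t := by
    intro t ht
    rw [hasDerivAt_pi]
    intro x
    have hchain := chain_aux (fun q : ℝ × (E → ℝ) => 𝒰 q.1 x q.2) (h𝒰smooth x) m
      (fun x' => ∑ y : E, m t y * qstar y x' (m t) (u t)) t (fun x' => hm x' t ht)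
    have hM := hmaster t x (m t)
    have hder : deriv (fun τ => 𝒰 τ x (m t)) t
        = H x (m t) (fun y => 𝒰 t y (m t))
          - ∑ x' : E, hstar (m t) (fun y => 𝒰 t y (m t)) x'
              * fderiv ℝ (fun μ => 𝒰 t x μ) (m t) (Pi.single x' 1) := by
      linarith
    have h1 : HasDerivAt (fun τ => 𝒰 τ x (m τ))
        (H x (m t) (fun y => 𝒰 t y (m t))
          - ∑ x' : E, hstar (m t) (fun y => 𝒰 t y (m t)) x'
              * fderiv ℝ (fun μ => 𝒰 t x μ) (m t) (Pi.single x' 1)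
          + ∑ x' : E, (∑ y : E, m t y * qstar y x' (m t) (u t))
              * fderiv ℝ (fun μ => 𝒰 t x μ) (m t) (Pi.single x' 1)) t := by
      rw [← hder]
      exact hchain
    have h2 := h1.sub (hu x t ht)
    have : HasDerivAt (fun τ => φ τ x)
        (H x (m t) (fun y => 𝒰 t y (m t))
          - ∑ x' : E, hstar (m t) (fun y => 𝒰 t y (m t)) x'
              * fderiv ℝ (fun μ => 𝒰 t x μ) (m t) (Pi.single x' 1)
          + ∑ x' : E, (∑ y : E, m t y * qstar y x' (m t) (u t))
              * fderiv ℝ (fun μ => 𝒰 t x μ) (m t) (Pi.single x' 1)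
          - H x (m t) (u t)) t := h2
    convert this using 1
    · rfl
    · rfl
    simp only [hφ', sub_mul, Finset.sum_sub_distrib]
    ring
  -- norm bound
  have hbound : ∀ t ∈ Set.Icc (0 : ℝ) T, ‖φ' t‖ ≤ C * ‖φ t‖ := by
    intro t ht
    have hnn : 0 ≤ C * ‖φ t‖ := mul_nonneg hC0 (norm_nonneg _)
    rw [pi_norm_le_iff_of_nonneg hnn]
    intro x
    rw [Real.norm_eq_abs]
    have hH : |H x (m t) (fun y => 𝒰 t y (m t)) - H x (m t) (u t)| ≤ L * ‖φ t‖ := by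
      have := hHlip t ht x (fun y => 𝒰 t y (m t)) (u t)
      rwa [hdiff t] at this
    have hterm : ∀ x' : E,
        |((∑ y : E, m t y * qstar y x' (m t) (u t))
            - hstar (m t) (fun y => 𝒰 t y (m t)) x')
          * fderiv ℝ (fun μ => 𝒰 t x μ) (m t) (Pi.single x' 1)|
        ≤ (N * (L * (L * ‖φ t‖))) * L := by
      intro x'
      rw [abs_mul]
      have hfactor : |(∑ y : E, m t y * qstar y x' (m t) (u t))
          - hstar (m t) (fun y => 𝒰 t y (m t)) x'| ≤ N * (L * (L * ‖φ t‖)) := by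
        rw [hhstar]
        have : (∑ y : E, m t y * qstar y x' (m t) (u t))
            - (∑ y : E, qstar y x' (m t) (fun y => 𝒰 t y (m t)) * m t y)
            = ∑ y : E, m t y * (qstar y x' (m t) (u t)
                - qstar y x' (m t) (fun y => 𝒰 t y (m t))) := by
          rw [← Finset.sum_sub_distrib]
          congr 1; funext y; ring
        rw [this]
        calc |∑ y : E, m t y * (qstar y x' (m t) (u t)
                - qstar y x' (m t) (fun y => 𝒰 t y (m t)))|
            ≤ ∑ y : E, |m t y * (qstar y x' (m t) (u t)
                - qstar y x' (m t) (fun y => 𝒰 t y (m t)))| :=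
              Finset.abs_sum_le_sum_abs _ _
          _ ≤ ∑ _y : E, L * (L * ‖φ t‖) := by
              apply Finset.sum_le_sum
              intro y _
              rw [abs_mul]
              have hq := hqlip t ht y x' (u t) (fun y => 𝒰 t y (m t))
              have hrw : u t - (fun y => 𝒰 t y (m t)) = -φ t := by
                funext z; simp [hφ]
              rw [hrw, norm_neg] at hq
              exact mul_le_mul (hmbd t ht y) hq (abs_nonneg _)
                hL0
          _ = N * (L * (L * ‖φ t‖)) := by
              rw [Finset.sum_const, Finset.card_univ, nsmul_eq_mul]
      exact mul_le_mul hfactor (h𝒰mbd t ht x x')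
        (abs_nonneg _) (by positivity)
    calc |φ' t x| ≤ |H x (m t) (fun y => 𝒰 t y (m t)) - H x (m t) (u t)|
          + |∑ x' : E, ((∑ y : E, m t y * qstar y x' (m t) (u t))
              - hstar (m t) (fun y => 𝒰 t y (m t)) x')
            * fderiv ℝ (fun μ => 𝒰 t x μ) (m t) (Pi.single x' 1)| := abs_add_le _ _
      _ ≤ L * ‖φ t‖ + ∑ x' : E, ((N * (L * (L * ‖φ t‖))) * L) := by
          gcongr
          exact le_trans (Finset.abs_sum_le_sum_abs _ _)
            (Finset.sum_le_sum fun x' _ => hterm x')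
      _ = C * ‖φ t‖ := by
          rw [Finset.sum_const, Finset.card_univ, nsmul_eq_mul]
          simp only [hC, hN]
          ring
  -- terminal condition
  have hφT : φ T = 0 := by
    funext x
    simp [hφ, h𝒰T, huT]
  -- reverse-time Gronwall
  set ψ : ℝ → E → ℝ := fun s => φ (T - s) with hψ
  have hψd : ∀ s : ℝ, T - s ∈ Set.Icc (0 : ℝ) T →
      HasDerivAt ψ ((-1 : ℝ) • φ' (T - s)) s := by
    intro s hTs
    have h0 : HasDerivAt (fun τ : ℝ => T - τ) (-1) s := by
      exact (hasDerivAt_id' s).const_sub T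
    exact (hderiv (T - s) hTs).scomp s h0
  have hψcont : ContinuousOn ψ (Set.Icc 0 T) := by
    intro s hs
    have hTs : T - s ∈ Set.Icc (0 : ℝ) T := ⟨by linarith [hs.2], by linarith [hs.1]⟩
    exact (hψd s hTs).continuousAt.continuousWithinAt
  have hψderiv : ∀ s ∈ Set.Ico (0 : ℝ) T,
      HasDerivWithinAt ψ ((-1 : ℝ) • φ' (T - s)) (Set.Ici s) s := by
    intro s hs
    have hTs : T - s ∈ Set.Icc (0 : ℝ) T := ⟨by linarith [hs.2], by linarith [hs.1]⟩
    exact (hψd s hTs).hasDerivWithinAt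
  have hψ0 : ‖ψ 0‖ ≤ 0 := by
    simp [hψ, hφT]
  have hψbd : ∀ s ∈ Set.Ico (0 : ℝ) T,
      ‖(-1 : ℝ) • φ' (T - s)‖ ≤ C * ‖ψ s‖ + 0 := by
    intro s hs
    have hTs : T - s ∈ Set.Icc (0 : ℝ) T := ⟨by linarith [hs.2], by linarith [hs.1]⟩
    rw [norm_smul, add_zero]
    simpa using hbound (T - s) hTs
  have hgron := norm_le_gronwallBound_of_norm_deriv_right_le hψcont hψderiv hψ0 hψbd
  intro t ht x
  have hs : T - t ∈ Set.Icc (0 : ℝ) T := ⟨by linarith [ht.2], by linarith [ht.1]⟩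
  have := hgron (T - t) hs
  rw [gronwallBound_ε0_δ0] at this
  have hz : ψ (T - t) = 0 := norm_le_zero_iff.mp this
  have : φ t = 0 := by
    have : ψ (T - t) = φ t := by simp [hψ]
    rw [← this, hz]
  have := congrFun this x
  simp only [hφ, Pi.zero_apply] at this
  linarith
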